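/- Let M be a twice continuously differentiable Orlicz function with M'(0)=0 and ∫_0^∞ y M''(y) dy < ∞. Define F̄(x) = (1/x) M'(1/x) − M(1/x) for x > 0. Then F̄ is nonincreasing on (0,∞), F̄(x) → 0 as x → ∞, and F̄(x) → ∫_0^∞ y M''(y) dy as x → 0⁺; in particular, after normalization by ∫_0^∞ y M''(y) dy, the function 1 − F̄ is a cumulative distribution function on (0,∞). -/

import Mathlib

open MeasureTheory Set Filter Topology

/-- For a twice continuously differentiable Orlicz function `M` with `M'(0)=0` and
`∫_0^∞ y M''(y) dy < ∞`, the function `F̄(x) = (1/x) M'(1/x) − M(1/x)` is nonincreasing on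
`(0,∞)`, tends to `0` at `∞` and to `∫_0^∞ y M''(y) dy` at `0⁺`; after normalization,
`1 − F̄` is a cumulative distribution function on `(0,∞)`. -/
theorem orlicz_tail_is_distribution
    (M : ℝ → ℝ)
    (hconv : ConvexOn ℝ (Set.Ici 0) M)
    (hM0 : M 0 = 0)
    (hMpos : ∀ t > (0:ℝ), 0 < M t)
    (hC2 : ContDiffOn ℝ 2 M (Set.Ici 0))
    (hd0 : deriv M 0 = 0)
    (hfin : IntegrableOn (fun y => y * deriv (deriv M) y) (Set.Ioi (0:ℝ)))
    (F : ℝ → ℝ)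
    (hF : ∀ x > (0:ℝ), F x = (1/x) * deriv M (1/x) - M (1/x)) :
    AntitoneOn F (Set.Ioi 0) ∧
    Tendsto F atTop (nhds 0) ∧
    Tendsto F (nhdsWithin 0 (Set.Ioi 0))
      (nhds (∫ y in Set.Ioi (0:ℝ), y * deriv (deriv M) y)) := by
  set f : ℝ → ℝ := fun y => y * deriv (deriv M) y with hf_def
  set G : ℝ → ℝ := fun t => t * deriv M t - M t with hG_def
  have hopen : IsOpen (Ioi (0:ℝ)) := isOpen_Ioi
  have hC2' : ContDiffOn ℝ 2 M (Ioi 0) := hC2.mono Ioi_subset_Ici_self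
  -- differentiability facts on (0, ∞)
  have hM_diff : ∀ t ∈ Ioi (0:ℝ), HasDerivAt M (deriv M t) t := fun t ht =>
    ((hC2'.differentiableOn (by norm_num)).differentiableAt (hopen.mem_nhds ht)).hasDerivAt
  have hC1' : ContDiffOn ℝ 1 (deriv M) (Ioi 0) := by
    have := hC2'.deriv_of_isOpen hopen (m := 1) (by norm_num)
    simpa using this
  have hM'_diff : ∀ t ∈ Ioi (0:ℝ), HasDerivAt (deriv M) (deriv (deriv M) t) t := fun t ht =>
    ((hC1'.differentiableOn one_ne_zero).differentiableAt (hopen.mem_nhds ht)).hasDerivAt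
  have hM''_cont : ContinuousOn (fun t => deriv (deriv M) t) (Ioi 0) := by
    have := hC1'.deriv_of_isOpen hopen (m := 0) (by norm_num)
    exact this.continuousOn
  have hf_cont : ContinuousOn f (Ioi 0) := continuousOn_id.mul hM''_cont
  -- nonnegativity of the second derivative from convexity
  have hM'_mono : MonotoneOn (deriv M) (Ioi 0) := by
    have hc : ConvexOn ℝ (Ioi 0) M := hconv.subset Ioi_subset_Ici_self (convex_Ioi 0)
    exact hc.monotoneOn_deriv fun t ht => (hM_diff t ht).differentiableAt
  have hf_nonneg : ∀ t ∈ Ioi (0:ℝ), 0 ≤ f t := by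
    intro t ht
    have hd := hM'_diff t ht
    have hslope : Tendsto (slope (deriv M) t) (𝓝[>] t) (𝓝 (deriv (deriv M) t)) :=
      (hasDerivAt_iff_tendsto_slope.1 hd).mono_left
        (nhdsWithin_mono _ fun y hy => ne_of_gt hy)
    have hev : ∀ᶠ y in 𝓝[>] t, 0 ≤ slope (deriv M) t y := by
      filter_upwards [self_mem_nhdsWithin] with y (hy : t < y)
      rw [slope_def_field]
      have h1 : deriv M t ≤ deriv M y := hM'_mono ht (lt_trans ht hy) hy.le
      have h2 : (0:ℝ) ≤ y - t := sub_nonneg.2 hy.le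
      rw [div_eq_inv_mul]
      exact mul_nonneg (inv_nonneg.2 h2) (sub_nonneg.2 h1)
    have h0 : 0 ≤ deriv (deriv M) t := ge_of_tendsto hslope hev
    exact mul_nonneg (le_of_lt ht) h0
  -- G' = f on (0, ∞)
  have hG_deriv : ∀ t ∈ Ioi (0:ℝ), HasDerivAt G (f t) t := by
    intro t ht
    have h1 : HasDerivAt (fun t => t * deriv M t)
        (1 * deriv M t + t * deriv (deriv M) t) t :=
      (hasDerivAt_id t).mul (hM'_diff t ht)
    have h2 := h1.sub (hM_diff t ht)
    rw [show f t = 1 * deriv M t + t * deriv (deriv M) t - deriv M t by simp only [hf_def]; ring]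
    exact h2
  -- FTC on compact subintervals of (0, ∞)
  have key : ∀ a b : ℝ, 0 < a → a ≤ b → ∫ y in a..b, f y = G b - G a := by
    intro a b ha hab
    have hsub : Set.uIcc a b ⊆ Ioi 0 := by
      rw [uIcc_of_le hab]
      exact fun y hy => lt_of_lt_of_le ha hy.1
    exact intervalIntegral.integral_eq_sub_of_hasDerivAt
      (fun t ht => hG_deriv t (hsub ht))
      ((hf_cont.mono hsub).intervalIntegrable)
  -- G is monotone on (0, ∞)
  have hG_mono : MonotoneOn G (Ioi 0) := by
    intro a ha b hb hab
    have h := key a b ha hab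
    have hnn : 0 ≤ ∫ y in a..b, f y :=
      intervalIntegral.integral_nonneg hab fun u hu =>
        hf_nonneg u (lt_of_lt_of_le ha hu.1)
    linarith [h ▸ hnn]
  -- limit of G at 0⁺ is 0
  have hL : Tendsto (deriv M) (𝓝[>] (0:ℝ)) (𝓝 (derivWithin M (Ici 0) 0)) := by
    have hcw : ContinuousWithinAt (derivWithin M (Ici 0)) (Ici 0) 0 :=
      (hC2.continuousOn_derivWithin (uniqueDiffOn_Ici 0) one_le_two) 0 self_mem_Ici
    have h1 : Tendsto (derivWithin M (Ici 0)) (𝓝[>] (0:ℝ))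
        (𝓝 (derivWithin M (Ici 0) 0)) :=
      hcw.mono_left (nhdsWithin_mono _ Ioi_subset_Ici_self)
    refine h1.congr' ?_
    filter_upwards [self_mem_nhdsWithin] with t (ht : (0:ℝ) < t)
    exact derivWithin_of_mem_nhds (Ici_mem_nhds ht)
  have hG0 : Tendsto G (𝓝[>] (0:ℝ)) (𝓝 0) := by
    have h1 : Tendsto (fun t : ℝ => t * deriv M t) (𝓝[>] (0:ℝ))
        (𝓝 (0 * derivWithin M (Ici 0) 0)) :=
      (tendsto_id.mono_left nhdsWithin_le_nhds).mul hL
    have h2 : Tendsto M (𝓝[>] (0:ℝ)) (𝓝 (M 0)) :=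
      (hC2.continuousOn 0 self_mem_Ici).mono_left (nhdsWithin_mono _ Ioi_subset_Ici_self)
    have := h1.sub h2
    simpa [hG_def, hM0] using this
  -- limit of G at atTop
  have hItail : IntegrableOn f (Ioi (1:ℝ)) := hfin.mono_set (Ioi_subset_Ioi zero_le_one)
  have hGtop : Tendsto G atTop (𝓝 ((∫ y in Ioi (1:ℝ), f y) + G 1)) := by
    have h1 : Tendsto (fun t : ℝ => ∫ y in (1:ℝ)..t, f y) atTop
        (𝓝 (∫ y in Ioi (1:ℝ), f y)) :=
      intervalIntegral_tendsto_integral_Ioi 1 hItail tendsto_id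
    have h2 : Tendsto (fun t : ℝ => (∫ y in (1:ℝ)..t, f y) + G 1) atTop
        (𝓝 ((∫ y in Ioi (1:ℝ), f y) + G 1)) := h1.add tendsto_const_nhds
    refine h2.congr' ?_
    filter_upwards [eventually_ge_atTop (1:ℝ)] with t ht
    rw [key 1 t one_pos ht]; ring
  -- the total integral equals the limit of G at atTop
  have hGcont0 : ContinuousWithinAt G (Ici 0) 0 := by
    rw [← Ioi_insert, continuousWithinAt_insert_self]
    have hG00 : G 0 = 0 := by simp [hG_def, hM0]
    unfold ContinuousWithinAt
    rw [hG00]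
    exact hG0
  have htotal : ∫ y in Ioi (0:ℝ), f y = ((∫ y in Ioi (1:ℝ), f y) + G 1) - G 0 :=
    integral_Ioi_of_hasDerivAt_of_tendsto hGcont0 hG_deriv hfin hGtop
  have hG00 : G 0 = 0 := by simp [hG_def, hM0]
  have htotal' : ((∫ y in Ioi (1:ℝ), f y) + G 1) = ∫ y in Ioi (0:ℝ), f y := by
    rw [htotal, hG00, sub_zero]
  -- relate F to G
  have hFG : ∀ x > (0:ℝ), F x = G (1/x) := fun x hx => hF x hx
  refine ⟨?_, ?_, ?_⟩
  · -- antitone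
    intro x hx y hy hxy
    rw [hFG x hx, hFG y hy]
    have hx' : (0:ℝ) < x := hx
    have hy' : (0:ℝ) < y := hy
    exact hG_mono (by positivity : (0:ℝ) < 1/y) (by positivity : (0:ℝ) < 1/x)
      (one_div_le_one_div_of_le hx' hxy)
  · -- limit at atTop
    have hinv : Tendsto (fun x : ℝ => 1/x) atTop (𝓝[>] (0:ℝ)) := by
      refine tendsto_nhdsWithin_of_tendsto_nhds_of_eventually_within _ ?_ ?_
      · simpa [one_div] using (tendsto_inv_atTop_zero (𝕜 := ℝ))
      · filter_upwards [eventually_gt_atTop (0:ℝ)] with x hx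
        exact mem_Ioi.2 (by positivity)
    have := hG0.comp hinv
    refine this.congr' ?_
    filter_upwards [eventually_gt_atTop (0:ℝ)] with x hx
    exact (hFG x hx).symm
  · -- limit at 0⁺
    have hinv : Tendsto (fun x : ℝ => 1/x) (𝓝[>] (0:ℝ)) atTop := by
      simpa [one_div] using (tendsto_inv_nhdsGT_zero (𝕜 := ℝ))
    have := hGtop.comp hinv
    rw [htotal'] at this
    refine this.congr' ?_
    filter_upwards [self_mem_nhdsWithin] with x (hx : (0:ℝ) < x)
    exact (hFG x hx).symm
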